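/- Let H : ℝ → ℝ be a Schwartz function and N ≥ 1. Then (1/N)·∑_{x ∈ ℤ} (N(H((x+1)/N) − H(x/N)))² converges to ∫_ℝ H'(u)² du as N → ∞. -/

import Mathlib

open Filter MeasureTheory Set Topology

private lemma schwartz_decay2 (G : SchwartzMap ℝ ℝ) :
    ∃ C : ℝ, 0 < C ∧ ∀ v : ℝ, (1 + |v|) ^ 2 * ‖G v‖ ≤ C := by
  obtain ⟨C0, hC0, h0⟩ := G.decay 0 0
  obtain ⟨C1, hC1, h1⟩ := G.decay 1 0
  obtain ⟨C2, hC2, h2⟩ := G.decay 2 0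
  refine ⟨C0 + 2 * C1 + C2, by positivity, fun v => ?_⟩
  have e0 := h0 v
  have e1 := h1 v
  have e2 := h2 v
  simp only [norm_iteratedFDeriv_zero, pow_zero, one_mul, pow_one, Real.norm_eq_abs] at e0 e1 e2
  rw [Real.norm_eq_abs]
  nlinarith [abs_nonneg (G v), abs_nonneg v]

private lemma tendsto_floor_div (u : ℝ) :
    Tendsto (fun N : ℕ => (⌊(N : ℝ) * u⌋ : ℝ) / N) atTop (𝓝 u) := by
  have h0 : Tendsto (fun N : ℕ => u - 1 / (N : ℝ)) atTop (𝓝 u) := by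
    simpa using tendsto_const_nhds.sub (tendsto_one_div_atTop_nhds_zero_nat (𝕜 := ℝ))
  refine tendsto_of_tendsto_of_tendsto_of_le_of_le' h0 tendsto_const_nhds ?_ ?_
  · filter_upwards [eventually_ge_atTop 1] with N hN
    have hN' : (0 : ℝ) < N := by exact_mod_cast hN
    have h1 : (N : ℝ) * u - 1 ≤ (⌊(N : ℝ) * u⌋ : ℝ) := by
      have := Int.sub_one_lt_floor ((N : ℝ) * u)
      linarith
    rw [sub_le_iff_le_add, ← add_div, le_div_iff₀ hN']
    nlinarith
  · filter_upwards [eventually_ge_atTop 1] with N hN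
    have hN' : (0 : ℝ) < N := by exact_mod_cast hN
    rw [div_le_iff₀ hN']
    have := Int.floor_le ((N : ℝ) * u)
    linarith [this]

private lemma tendsto_floor_add_one_div (u : ℝ) :
    Tendsto (fun N : ℕ => ((⌊(N : ℝ) * u⌋ : ℝ) + 1) / N) atTop (𝓝 u) := by
  have := (tendsto_floor_div u).add tendsto_one_div_atTop_nhds_zero_nat
  simpa [add_div] using this

private lemma key_pointwise (H : SchwartzMap ℝ ℝ) (u : ℝ) :
    Tendsto (fun N : ℕ => (N : ℝ) * (H (((⌊(N : ℝ) * u⌋ : ℝ) + 1) / N) - H ((⌊(N : ℝ) * u⌋ : ℝ) / N)))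
      atTop (𝓝 (deriv H u)) := by
  have hsd : HasStrictDerivAt H (deriv H u) u :=
    ((H.smooth 1).contDiffAt.hasStrictDerivAt (by norm_num))
  have ho := hsd.hasStrictFDerivAt.isLittleO
  rw [Metric.tendsto_atTop]
  intro ε εpos
  have h1 := ho.def (half_pos εpos)
  have hq : Tendsto (fun N : ℕ => (((⌊(N : ℝ) * u⌋ : ℝ) + 1) / N, (⌊(N : ℝ) * u⌋ : ℝ) / N))
      atTop (𝓝 (u, u)) :=
    (tendsto_floor_add_one_div u).prodMk_nhds (tendsto_floor_div u)
  have h2 := hq.eventually h1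
  have h3 : ∀ᶠ N : ℕ in atTop,
      dist ((N : ℝ) * (H (((⌊(N : ℝ) * u⌋ : ℝ) + 1) / N) - H ((⌊(N : ℝ) * u⌋ : ℝ) / N)))
        (deriv H u) < ε := by
    filter_upwards [h2, eventually_ge_atTop 1] with N hN hN1
    have hN' : (0 : ℝ) < N := by exact_mod_cast hN1
    set a : ℝ := ((⌊(N : ℝ) * u⌋ : ℝ) + 1) / N
    set b : ℝ := (⌊(N : ℝ) * u⌋ : ℝ) / N
    have hab : a - b = 1 / N := by simp only [a, b, ← sub_div, add_sub_cancel_left]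
    simp only [ContinuousLinearMap.toSpanSingleton_apply, ContinuousLinearMap.smulRight_apply, ContinuousLinearMap.one_apply,
      smul_eq_mul] at hN
    rw [hab] at hN
    have hnorm : ‖(1 : ℝ) / N‖ = 1 / N := by
      rw [Real.norm_eq_abs, abs_of_pos (by positivity)]
    rw [hnorm] at hN
    have key : (N : ℝ) * (H a - H b) - deriv H u = N * (H a - H b - 1 / N * deriv H u) := by
      field_simp
    rw [Real.dist_eq, key, abs_mul, abs_of_pos hN']
    calc (N : ℝ) * |H a - H b - 1 / N * deriv H u| ≤ N * (ε / 2 * (1 / N)) := by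
          have := hN
          rw [Real.norm_eq_abs] at this
          exact mul_le_mul_of_nonneg_left this hN'.le
      _ = ε / 2 := by field_simp
      _ < ε := by linarith
  exact (eventually_atTop.mp h3).imp fun N₀ h N hN => h N hN

private lemma key_bound (H : SchwartzMap ℝ ℝ) {C : ℝ}
    (hC : ∀ v : ℝ, (1 + |v|) ^ 2 * ‖deriv H v‖ ≤ C)
    {N : ℕ} (hN : 1 ≤ N) (u : ℝ) :
    |(N : ℝ) * (H (((⌊(N : ℝ) * u⌋ : ℝ) + 1) / N) - H ((⌊(N : ℝ) * u⌋ : ℝ) / N))|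
      ≤ 4 * C / (1 + |u|) ^ 2 := by
  have hN' : (0 : ℝ) < N := by exact_mod_cast hN
  have hN1 : 1 / (N : ℝ) ≤ 1 := by
    rw [div_le_one hN']; exact_mod_cast hN
  set a : ℝ := ((⌊(N : ℝ) * u⌋ : ℝ) + 1) / N
  set b : ℝ := (⌊(N : ℝ) * u⌋ : ℝ) / N
  have hbu : b ≤ u := by
    rw [div_le_iff₀ hN']
    have := Int.floor_le ((N : ℝ) * u); linarith
  have hub : u - 1 / N ≤ b := by
    rw [sub_le_iff_le_add, ← add_div, le_div_iff₀ hN']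
    have := Int.sub_one_lt_floor ((N : ℝ) * u); nlinarith
  have hab : a = b + 1 / N := by simp only [a, b, add_div]
  have hamem : a ∈ Icc (u - 1) (u + 1) := by
    constructor
    · rw [hab]; have : (0:ℝ) < 1 / N := by positivity
      linarith
    · rw [hab]; linarith
  have hbmem : b ∈ Icc (u - 1) (u + 1) := ⟨by linarith, by linarith⟩
  have hKbound : ∀ v ∈ Icc (u - 1) (u + 1), ‖deriv H v‖ ≤ 4 * C / (1 + |u|) ^ 2 := by
    intro v hv
    rw [le_div_iff₀ (by positivity)]
    have h1 : |u| ≤ |v| + 1 := by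
      have : |u - v| ≤ 1 := abs_sub_le_iff.mpr ⟨by linarith [hv.1], by linarith [hv.2]⟩
      calc |u| = |v + (u - v)| := by ring_nf
        _ ≤ |v| + |u - v| := abs_add_le _ _
        _ ≤ |v| + 1 := by linarith
    have h2 := hC v
    have h3 : (1 + |u|) ^ 2 ≤ 4 * (1 + |v|) ^ 2 := by nlinarith [abs_nonneg v, abs_nonneg u]
    calc ‖deriv H v‖ * (1 + |u|) ^ 2 ≤ ‖deriv H v‖ * (4 * (1 + |v|) ^ 2) :=
          mul_le_mul_of_nonneg_left h3 (norm_nonneg _)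
      _ = 4 * ((1 + |v|) ^ 2 * ‖deriv H v‖) := by ring
      _ ≤ 4 * C := by linarith
  have hmvt : ‖H a - H b‖ ≤ (4 * C / (1 + |u|) ^ 2) * ‖a - b‖ :=
    (convex_Icc (u - 1) (u + 1)).norm_image_sub_le_of_norm_hasDerivWithin_le
      (fun v _ => (H.differentiableAt.hasDerivAt).hasDerivWithinAt) hKbound hbmem hamem
  have habs : ‖a - b‖ = 1 / N := by
    rw [hab, Real.norm_eq_abs]; simp [abs_of_pos hN']
  rw [habs] at hmvt
  rw [abs_mul, abs_of_pos hN']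
  calc (N : ℝ) * |H a - H b| ≤ N * ((4 * C / (1 + |u|) ^ 2) * (1 / N)) := by
        apply mul_le_mul_of_nonneg_left _ hN'.le
        rw [← Real.norm_eq_abs]; exact hmvt
    _ = 4 * C / (1 + |u|) ^ 2 := by field_simp

private lemma sum_eq_integral (H : SchwartzMap ℝ ℝ) {N : ℕ} (hN : 1 ≤ N)
    (hInt : Integrable (fun u : ℝ =>
      ((N : ℝ) * (H (((⌊(N : ℝ) * u⌋ : ℝ) + 1) / N) - H ((⌊(N : ℝ) * u⌋ : ℝ) / N))) ^ 2)) :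
    (1 / (N : ℝ)) * ∑' x : ℤ, ((N : ℝ) * (H (((x : ℝ) + 1) / N) - H ((x : ℝ) / N))) ^ 2
      = ∫ u : ℝ,
          ((N : ℝ) * (H (((⌊(N : ℝ) * u⌋ : ℝ) + 1) / N) - H ((⌊(N : ℝ) * u⌋ : ℝ) / N))) ^ 2 := by
  have hN' : (0 : ℝ) < N := by exact_mod_cast hN
  set φ : ℝ → ℝ := fun u =>
    ((N : ℝ) * (H (((⌊(N : ℝ) * u⌋ : ℝ) + 1) / N) - H ((⌊(N : ℝ) * u⌋ : ℝ) / N))) ^ 2 with hφ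
  set s : ℤ → Set ℝ := fun x => Ico ((x : ℝ) / N) (((x : ℝ) + 1) / N) with hs
  have hcover : (⋃ x : ℤ, s x) = univ := by
    ext u
    simp only [mem_iUnion, mem_univ, iff_true, hs, mem_Ico]
    refine ⟨⌊(N : ℝ) * u⌋, ?_, ?_⟩
    · rw [div_le_iff₀ hN']
      have := Int.floor_le ((N : ℝ) * u); linarith
    · rw [lt_div_iff₀ hN']
      have := Int.lt_floor_add_one ((N : ℝ) * u); push_cast; linarith
  have hdisj : Pairwise (Function.onFun Disjoint s) := by
    intro x y hxy
    rw [Function.onFun, hs, Set.Ico_disjoint_Ico]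
    rcases hxy.lt_or_gt with h | h
    · have : ((x : ℝ) + 1) / N ≤ (y : ℝ) / N := by
        apply div_le_div_of_nonneg_right ?_ hN'.le
        exact_mod_cast Int.add_one_le_of_lt h
      exact le_trans (min_le_left _ _) (le_trans this (le_max_right _ _))
    · have : ((y : ℝ) + 1) / N ≤ (x : ℝ) / N := by
        apply div_le_div_of_nonneg_right ?_ hN'.le
        exact_mod_cast Int.add_one_le_of_lt h
      exact le_trans (min_le_right _ _) (le_trans this (le_max_left _ _))
  have h1 : ∫ u : ℝ, φ u = ∑' x : ℤ, ∫ u in s x, φ u := by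
    rw [← setIntegral_univ, ← hcover,
      integral_iUnion (fun x => measurableSet_Ico) hdisj (hcover ▸ hInt.integrableOn)]
  have h2 : ∀ x : ℤ, ∫ u in s x, φ u
      = (1 / (N : ℝ)) * ((N : ℝ) * (H (((x : ℝ) + 1) / N) - H ((x : ℝ) / N))) ^ 2 := by
    intro x
    have hfl : ∀ u ∈ s x, ⌊(N : ℝ) * u⌋ = x := by
      intro u hu
      rw [hs, mem_Ico] at hu
      rw [Int.floor_eq_iff]
      constructor
      · rw [div_le_iff₀ hN'] at hu
        nlinarith [hu.1]
      · rw [lt_div_iff₀ hN'] at hu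
        push_cast at hu ⊢
        nlinarith [hu.2]
    have hEq : Set.EqOn φ
        (fun _ : ℝ => ((N : ℝ) * (H (((x : ℝ) + 1) / N) - H ((x : ℝ) / N))) ^ 2) (s x) := by
      intro u hu
      simp only [hφ, hfl u hu]
    rw [setIntegral_congr_fun measurableSet_Ico hEq, setIntegral_const]
    simp only [Measure.real, Real.volume_Ico]
    have hlen : ((x : ℝ) + 1) / N - (x : ℝ) / N = 1 / N := by field_simp; ring
    rw [hlen, ENNReal.toReal_ofReal (by positivity), smul_eq_mul]
  rw [h1, tsum_congr h2, tsum_mul_left]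

/-- Riemann-sum convergence of the squared discrete gradient:
`(1/N)·∑_{x∈ℤ} (N(H((x+1)/N) − H(x/N)))² → ∫ H'(u)² du` as `N → ∞`. -/
theorem discrete_gradient_square_sum_tendsto (H : SchwartzMap ℝ ℝ) :
    Tendsto
      (fun N : ℕ =>
        (1 / (N : ℝ)) *
          ∑' x : ℤ, ((N : ℝ) * (H (((x : ℝ) + 1) / N) - H ((x : ℝ) / N))) ^ 2)
      atTop (nhds (∫ u : ℝ, (deriv H u) ^ 2)) := by
  obtain ⟨C, hCpos, hC⟩ := schwartz_decay2 (SchwartzMap.derivCLM ℝ ℝ H)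
  simp only [SchwartzMap.derivCLM_apply] at hC
  set φ : ℕ → ℝ → ℝ := fun N u =>
    ((N : ℝ) * (H (((⌊(N : ℝ) * u⌋ : ℝ) + 1) / N) - H ((⌊(N : ℝ) * u⌋ : ℝ) / N))) ^ 2 with hφ
  set D : ℝ → ℝ := fun u => 16 * C ^ 2 / (1 + u ^ 2) with hD
  have hDnn : ∀ u, 0 ≤ D u := fun u => by rw [hD]; positivity
  have hDint : Integrable D := by
    have := integrable_inv_one_add_sq.const_mul (16 * C ^ 2)
    simpa [hD, div_eq_mul_inv] using this
  have hmeas : ∀ N : ℕ, AEStronglyMeasurable (φ N) volume := by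
    intro N
    have h1 : Measurable fun u : ℝ => ⌊(N : ℝ) * u⌋ :=
      Int.measurable_floor.comp (measurable_const_mul _)
    have h2 : Measurable (φ N) :=
      (measurable_from_top
        (f := fun x : ℤ => ((N : ℝ) * (H (((x : ℝ) + 1) / N) - H ((x : ℝ) / N))) ^ 2)).comp h1
    exact h2.aestronglyMeasurable
  have hbound : ∀ N : ℕ, ∀ᵐ u : ℝ, ‖φ N u‖ ≤ D u := by
    intro N
    refine Filter.Eventually.of_forall fun u => ?_
    have hnorm : ‖φ N u‖ = φ N u := by
      rw [Real.norm_eq_abs, abs_of_nonneg (sq_nonneg _)]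
    rw [hnorm]
    rcases Nat.eq_zero_or_pos N with h | h
    · subst h
      simp only [hφ, Nat.cast_zero, zero_mul, ne_eq, OfNat.ofNat_ne_zero,
        not_false_eq_true, zero_pow]
      exact hDnn u
    · have hb := key_bound H hC h u
      have h1 : φ N u ≤ (4 * C / (1 + |u|) ^ 2) ^ 2 := by
        rw [hφ]
        simp only
        rw [← sq_abs]
        exact pow_le_pow_left₀ (abs_nonneg _) hb 2
      refine h1.trans ?_
      rw [hD, div_pow]
      have : (4 * C) ^ 2 = 16 * C ^ 2 := by ring
      rw [this]
      apply div_le_div_of_nonneg_left (by positivity) (by positivity)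
      nlinarith [abs_nonneg u, sq_abs u]
  have hlim : ∀ᵐ u : ℝ, Tendsto (fun N : ℕ => φ N u) atTop (𝓝 ((deriv H u) ^ 2)) :=
    Filter.Eventually.of_forall fun u => (key_pointwise H u).pow 2
  have hDCT := tendsto_integral_of_dominated_convergence D hmeas hDint hbound hlim
  refine Tendsto.congr' ?_ hDCT
  filter_upwards [eventually_ge_atTop 1] with N hN
  have hInt : Integrable (φ N) := by
    refine hDint.mono (hmeas N) ?_
    filter_upwards [hbound N] with u hu
    exact hu.trans (le_abs_self _)
  exact (sum_eq_integral H hN hInt).symm
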